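/- Let f : ℍⁿ \ {0} → ℝ be homogeneous of degree λ and C² away from 0. Then there exists C > 0 such that |f(ξη) + f(ξη⁻¹) − 2f(ξ)| ≤ C|η|²|ξ|^{λ−2} whenever |η| ≤ |ξ|/2. -/

import Mathlib

open MeasureTheory Filter Set
open scoped BigOperators ENNReal NNReal Real Topology

noncomputable section

/-- The Heisenberg group `ℍⁿ = ℂⁿ × ℝ` (as a set, with Euclidean structure on `ℂⁿ`). -/
abbrev Hgrp (n : ℕ) : Type := EuclideanSpace ℂ (Fin n) × ℝ

/-- Heisenberg group multiplication `(z,t)(w,s) = (z+w, t+s+2 Im (z ⬝ conj w))`. -/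
def hmul {n : ℕ} (ξ η : Hgrp n) : Hgrp n :=
  (ξ.1 + η.1, ξ.2 + η.2 + 2 * (∑ j, ξ.1 j * (starRingEnd ℂ) (η.1 j)).im)

/-- Heisenberg group inverse `(z,t)⁻¹ = (-z,-t)`. -/
def hinv {n : ℕ} (ξ : Hgrp n) : Hgrp n := (-ξ.1, -ξ.2)

/-- Anisotropic dilations `δ_r(z,t) = (rz, r²t)`. -/
def dil {n : ℕ} (r : ℝ) (ξ : Hgrp n) : Hgrp n := (r • ξ.1, r ^ 2 * ξ.2)

/-- Homogeneous norm `|(z,t)| = (|z|⁴ + t²)^{1/4}`. -/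
def hnorm {n : ℕ} (ξ : Hgrp n) : ℝ := (‖ξ.1‖ ^ 4 + ξ.2 ^ 2) ^ ((1 : ℝ) / 4)

/-- Homogeneous dimension `Q = 2n+2` (as a real number). -/
def Qdim (n : ℕ) : ℝ := 2 * n + 2

instance (n : ℕ) : MeasurableSpace (EuclideanSpace ℂ (Fin n)) :=
  MeasurableSpace.comap (WithLp.ofLp (p := 2)) (inferInstance : MeasurableSpace (∀ _ : Fin n, ℂ))

instance (n : ℕ) : MeasureSpace (EuclideanSpace ℂ (Fin n)) :=
  ⟨Measure.map (WithLp.toLp 2 : (Fin n → ℂ) → EuclideanSpace ℂ (Fin n)) (volume : Measure (∀ _ : Fin n, ℂ))⟩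

namespace FSaux

variable {n : ℕ}

lemma hnorm_nonneg (ξ : Hgrp n) : 0 ≤ hnorm ξ := Real.rpow_nonneg (by positivity) _

lemma hnorm_pow4 (ξ : Hgrp n) : hnorm ξ ^ 4 = ‖ξ.1‖ ^ 4 + ξ.2 ^ 2 := by
  rw [hnorm, ← Real.rpow_natCast (_ ^ ((1:ℝ)/4)) 4, ← Real.rpow_mul (by positivity)]
  norm_num

lemma hnorm_eq_zero {ξ : Hgrp n} (h : hnorm ξ = 0) : ξ = 0 := by
  have h4 : ‖ξ.1‖ ^ 4 + ξ.2 ^ 2 = 0 := by rw [← hnorm_pow4, h]; ring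
  have h1 : ‖ξ.1‖ ^ 4 = 0 := by nlinarith [sq_nonneg ξ.2, pow_nonneg (norm_nonneg ξ.1) 4]
  have h2 : ξ.2 = 0 := by nlinarith [pow_nonneg (norm_nonneg ξ.1) 4]
  have : ξ.1 = 0 := norm_eq_zero.mp (by simpa using pow_eq_zero_iff (n := 4) (by norm_num) |>.mp h1)
  exact Prod.ext this h2

lemma hg_norm_fst_le (ξ : Hgrp n) : ‖ξ.1‖ ≤ hnorm ξ := by
  have h4 : ‖ξ.1‖ ^ 4 ≤ hnorm ξ ^ 4 := by rw [hnorm_pow4]; nlinarith [sq_nonneg ξ.2]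
  exact le_of_pow_le_pow_left₀ (by norm_num) (hnorm_nonneg ξ) h4

lemma hg_abs_snd_le (ξ : Hgrp n) : |ξ.2| ≤ hnorm ξ ^ 2 := by
  have h4 : ξ.2 ^ 2 ≤ (hnorm ξ ^ 2) ^ 2 := by
    rw [← pow_mul, hnorm_pow4]; nlinarith [pow_nonneg (norm_nonneg ξ.1) 4]
  have := Real.sqrt_le_sqrt h4
  rwa [Real.sqrt_sq_eq_abs, Real.sqrt_sq (by positivity)] at this

lemma hnorm_dil {r : ℝ} (hr : 0 < r) (ξ : Hgrp n) : hnorm (dil r ξ) = r * hnorm ξ := by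
  have h1 : ‖r • ξ.1‖ = r * ‖ξ.1‖ := by
    rw [norm_smul, Real.norm_eq_abs, abs_of_pos hr]
  rw [hnorm, dil]
  simp only [h1]
  have : (r * ‖ξ.1‖) ^ 4 + (r ^ 2 * ξ.2) ^ 2 = r ^ 4 * (‖ξ.1‖ ^ 4 + ξ.2 ^ 2) := by ring
  rw [this, Real.mul_rpow (by positivity) (by positivity),
    ← Real.rpow_natCast r 4, ← Real.rpow_mul hr.le]
  norm_num [hnorm]

lemma dil_dil (r r' : ℝ) (ξ : Hgrp n) : dil r (dil r' ξ) = dil (r * r') ξ := by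
  simp [dil, mul_smul, Prod.ext_iff]; ring

lemma dil_one (ξ : Hgrp n) : dil 1 ξ = ξ := by simp [dil]

lemma dil_hmul (r : ℝ) (ξ η : Hgrp n) : dil r (hmul ξ η) = hmul (dil r ξ) (dil r η) := by
  refine Prod.ext (by simp [dil, hmul, smul_add]) ?_
  have : ∀ j, (r • ξ.1) j * (starRingEnd ℂ) ((r • η.1) j) = ((r^2:ℝ):ℂ) * (ξ.1 j * (starRingEnd ℂ) (η.1 j)) := by
    intro j
    simp [PiLp.smul_apply, Complex.real_smul, map_mul, Complex.conj_ofReal]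
    ring
  simp only [dil, hmul]
  rw [Finset.sum_congr rfl (fun j _ => this j), ← Finset.mul_sum, Complex.im_ofReal_mul]
  ring

lemma dil_hinv (r : ℝ) (ξ : Hgrp n) : dil r (hinv ξ) = hinv (dil r ξ) := by
  simp [dil, hinv, Prod.ext_iff, mul_neg]

/-- The vector such that `hmul ξ η = ξ + hvec ξ η`. -/
def hvec (ξ η : Hgrp n) : Hgrp n :=
  (η.1, η.2 + 2 * (∑ j, ξ.1 j * (starRingEnd ℂ) (η.1 j)).im)

lemma hmul_eq_add (ξ η : Hgrp n) : hmul ξ η = ξ + hvec ξ η := by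
  refine Prod.ext rfl ?_
  simp only [hmul, hvec, Prod.snd_add]
  ring

lemma hmul_hinv_eq_sub (ξ η : Hgrp n) : hmul ξ (hinv η) = ξ - hvec ξ η := by
  refine Prod.ext (by simp [hmul, hinv, hvec, sub_eq_add_neg]) ?_
  simp only [hmul, hinv, hvec, Prod.snd_sub]
  have : ∀ j, ξ.1 j * (starRingEnd ℂ) ((-η.1) j) = -(ξ.1 j * (starRingEnd ℂ) (η.1 j)) := by
    intro j; simp [PiLp.neg_apply]
  rw [Finset.sum_congr rfl (fun j _ => this j), Finset.sum_neg_distrib, Complex.neg_im]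
  ring

lemma sum_eq_inner (ξ η : Hgrp n) :
    (∑ j, ξ.1 j * (starRingEnd ℂ) (η.1 j)) = @inner ℂ _ _ η.1 ξ.1 := by
  rw [PiLp.inner_apply]
  exact Finset.sum_congr rfl fun j _ => by simp [RCLike.inner_apply, mul_comm]

lemma abs_im_sum_le (ξ η : Hgrp n) :
    |(∑ j, ξ.1 j * (starRingEnd ℂ) (η.1 j)).im| ≤ ‖ξ.1‖ * ‖η.1‖ := by
  rw [sum_eq_inner]
  calc |(@inner ℂ _ _ η.1 ξ.1).im| ≤ ‖(@inner ℂ _ _ η.1 ξ.1 : ℂ)‖ := by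
        simpa using Complex.abs_im_le_norm (@inner ℂ _ _ η.1 ξ.1)
    _ ≤ ‖η.1‖ * ‖ξ.1‖ := norm_inner_le_norm _ _
    _ = ‖ξ.1‖ * ‖η.1‖ := mul_comm _ _

lemma hvec_norm_le {ξ η : Hgrp n} (hξ : hnorm ξ = 1) (hη : hnorm η ≤ 1/2) :
    ‖hvec ξ η‖ ≤ 3 * hnorm η := by
  have hρ0 : 0 ≤ hnorm η := hnorm_nonneg η
  have h1 : ‖η.1‖ ≤ hnorm η := hg_norm_fst_le η
  have h2 : |η.2| ≤ hnorm η ^ 2 := hg_abs_snd_le η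
  have h3 : |(∑ j, ξ.1 j * (starRingEnd ℂ) (η.1 j)).im| ≤ 1 * hnorm η := by
    calc _ ≤ ‖ξ.1‖ * ‖η.1‖ := abs_im_sum_le ξ η
      _ ≤ 1 * hnorm η := by
        have := hg_norm_fst_le ξ
        rw [hξ] at this
        exact mul_le_mul this h1 (norm_nonneg _) zero_le_one
  rw [Prod.norm_def]
  refine max_le (by simp only [hvec]; linarith) ?_
  have : ‖(hvec ξ η).2‖ = |η.2 + 2 * (∑ j, ξ.1 j * (starRingEnd ℂ) (η.1 j)).im| := rfl
  rw [this]
  calc |η.2 + 2 * (∑ j, ξ.1 j * (starRingEnd ℂ) (η.1 j)).im|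
      ≤ |η.2| + 2 * |(∑ j, ξ.1 j * (starRingEnd ℂ) (η.1 j)).im| := by
        have := abs_add_le η.2 (2 * (∑ j, ξ.1 j * (starRingEnd ℂ) (η.1 j)).im)
        rwa [abs_mul, abs_two] at this
    _ ≤ hnorm η ^ 2 + 2 * (1 * hnorm η) := by linarith
    _ ≤ 3 * hnorm η := by nlinarith

lemma nonvanish {ξ η : Hgrp n} {s : ℝ} (hξ : hnorm ξ = 1) (hη : hnorm η ≤ 1/2)
    (hs : |s| ≤ 1) : ξ + s • hvec ξ η ≠ 0 := by
  intro h0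
  have h1 : ξ.1 + s • η.1 = 0 := congrArg Prod.fst h0
  have h2 : ξ.2 + s * (η.2 + 2 * (∑ j, ξ.1 j * (starRingEnd ℂ) (η.1 j)).im) = 0 :=
    congrArg Prod.snd h0
  have hx1 : ξ.1 = -(s • η.1) := by linear_combination (norm := module) h1
  have him : (∑ j, ξ.1 j * (starRingEnd ℂ) (η.1 j)).im = 0 := by
    have : ∀ j, ξ.1 j * (starRingEnd ℂ) (η.1 j)
        = -((s : ℂ) * (Complex.normSq (η.1 j) : ℂ)) := by
      intro j
      rw [hx1]
      simp [PiLp.neg_apply, PiLp.smul_apply, Complex.real_smul, mul_assoc, Complex.mul_conj]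
    rw [Finset.sum_congr rfl (fun j _ => this j), Finset.sum_neg_distrib, ← Finset.mul_sum,
      ← Complex.ofReal_sum, Complex.neg_im, Complex.im_ofReal_mul]
    simp
  have hx2 : ξ.2 = -(s * η.2) := by rw [him] at h2; linarith
  have hns : ‖ξ.1‖ = |s| * ‖η.1‖ := by rw [hx1, norm_neg, norm_smul, Real.norm_eq_abs]
  have hle : hnorm ξ ^ 4 ≤ hnorm η ^ 4 := by
    rw [hnorm_pow4, hnorm_pow4, hns, hx2]
    have e1 : ‖η.1‖ ≥ 0 := norm_nonneg _
    have e2 : |s| ≥ 0 := abs_nonneg s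
    have e3 : (-(s*η.2))^2 = s^2 * η.2^2 := by ring
    have e4 : s^2 ≤ 1 := by nlinarith [sq_abs s]
    rw [e3]
    have : (|s| * ‖η.1‖)^4 = (|s|)^4 * ‖η.1‖^4 := by ring
    rw [this]
    nlinarith [pow_nonneg e1 4, sq_nonneg η.2, pow_le_one₀ (n := 4) e2 hs, sq_nonneg (|s|^2)]
  rw [hξ] at hle
  have h4 : hnorm η ^ 4 ≤ (1/2:ℝ)^4 := pow_le_pow_left₀ (hnorm_nonneg η) hη 4
  norm_num at h4 hle
  linarith

lemma second_diff_bound {E : Type*} [NormedAddCommGroup E] [NormedSpace ℝ E]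
    {U : Set E} (hU : IsOpen U) {f : E → ℝ}
    (hreg : ContDiffOn ℝ 2 f U) {ξ h : E} {M : ℝ}
    (hmem : ∀ s ∈ Icc (-1:ℝ) 1, ξ + s • h ∈ U)
    (hM : ∀ s ∈ Icc (-1:ℝ) 1, ‖fderiv ℝ (fderiv ℝ f) (ξ + s • h)‖ ≤ M) :
    |f (ξ + h) + f (ξ - h) - 2 * f ξ| ≤ 2 * M * ‖h‖ ^ 2 := by
  have hdf : ContDiffOn ℝ 1 (fderiv ℝ f) U := hreg.fderiv_of_isOpen hU (by norm_num)
  have hdiff : ∀ x ∈ U, DifferentiableAt ℝ f x := fun x hx =>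
    (hreg.differentiableOn two_ne_zero).differentiableAt (hU.mem_nhds hx)
  have hdiff2 : ∀ x ∈ U, DifferentiableAt ℝ (fderiv ℝ f) x := fun x hx =>
    (hdf.differentiableOn one_ne_zero).differentiableAt (hU.mem_nhds hx)
  set seg : Set E := (fun u : ℝ => ξ + u • h) '' Icc (-1) 1 with hseg
  have hconv : Convex ℝ seg := by
    have heq : (fun u : ℝ => ξ + u • h) = fun u : ℝ => (AffineMap.lineMap ξ (ξ + h) : ℝ →ᵃ[ℝ] E) u := by
      funext u
      simp [AffineMap.lineMap_apply_module]
      module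
    rw [hseg, heq]
    exact (convex_Icc _ _).affine_image _
  have hsegU : seg ⊆ U := by rintro x ⟨u, hu, rfl⟩; exact hmem u hu
  have hsegmem : ∀ s ∈ Icc (-1:ℝ) 1, ξ + s • h ∈ seg := fun s hs => ⟨s, hs, rfl⟩
  have lip : ∀ a ∈ seg, ∀ b ∈ seg, ‖fderiv ℝ f a - fderiv ℝ f b‖ ≤ M * ‖a - b‖ := by
    intro a ha b hb
    exact hconv.norm_image_sub_le_of_norm_hasFDerivWithin_le
      (fun x hx => ((hdiff2 x (hsegU hx)).hasFDerivAt).hasFDerivWithinAt)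
      (fun x hx => by obtain ⟨u, hu, rfl⟩ := hx; exact hM u hu) hb ha
  set F : ℝ → ℝ := fun s => f (ξ + s • h) + f (ξ + s • (-h)) with hF
  set F' : ℝ → ℝ := fun s => (fderiv ℝ f (ξ + s • h)) h - (fderiv ℝ f (ξ + s • (-h))) h with hF'
  have hM0 : 0 ≤ M := le_trans (norm_nonneg (fderiv ℝ (fderiv ℝ f) (ξ + (0:ℝ) • h))) (hM 0 (by norm_num))
  have hFd : ∀ s ∈ Icc (0:ℝ) 1, HasDerivWithinAt F (F' s) (Icc 0 1) s := by
    intro s hs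
    have hs1 : s ∈ Icc (-1:ℝ) 1 := ⟨by linarith [hs.1], hs.2⟩
    have hs2 : -s ∈ Icc (-1:ℝ) 1 := ⟨by linarith [hs.2], by linarith [hs.1]⟩
    have c1 : HasDerivAt (fun u : ℝ => ξ + u • h) h s := by
      simpa using ((hasDerivAt_id s).smul_const h).const_add ξ
    have c2 : HasDerivAt (fun u : ℝ => ξ + u • (-h)) (-h) s := by
      simpa using ((hasDerivAt_id s).smul_const (-h)).const_add ξ
    have m1 : ξ + s • h ∈ U := hmem s hs1
    have m2 : ξ + s • (-h) ∈ U := by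
      have := hmem (-s) hs2
      rwa [neg_smul, ← smul_neg] at this
    have d1 := (hdiff _ m1).hasFDerivAt.comp_hasDerivAt s c1
    have d2 := (hdiff _ m2).hasFDerivAt.comp_hasDerivAt s c2
    have dsum : HasDerivAt F ((fderiv ℝ f (ξ + s • h)) h + (fderiv ℝ f (ξ + s • (-h))) (-h)) s := d1.add d2
    have heq2 : (fderiv ℝ f (ξ + s • h)) h + (fderiv ℝ f (ξ + s • (-h))) (-h) = F' s := by
      simp only [hF']; rw [map_neg, ← sub_eq_add_neg]
    rw [heq2] at dsum
    exact dsum.hasDerivWithinAt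
  have hbound : ∀ s ∈ Ico (0:ℝ) 1, ‖F' s‖ ≤ 2 * M * ‖h‖ ^ 2 := by
    intro s hs
    have hs1 : s ∈ Icc (-1:ℝ) 1 := ⟨by linarith [hs.1], le_of_lt hs.2⟩
    have hs2 : -s ∈ Icc (-1:ℝ) 1 := ⟨by linarith [hs.2], by linarith [hs.1]⟩
    have ha : ξ + s • h ∈ seg := hsegmem s hs1
    have hb : ξ + s • (-h) ∈ seg := by
      have := hsegmem (-s) hs2
      rwa [neg_smul, ← smul_neg] at this
    have hl := lip _ ha _ hb
    have hrw : F' s = ((fderiv ℝ f (ξ + s • h)) - (fderiv ℝ f (ξ + s • (-h)))) h := by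
      simp [hF', ContinuousLinearMap.sub_apply]
    rw [hrw]
    calc ‖((fderiv ℝ f (ξ + s • h)) - (fderiv ℝ f (ξ + s • (-h)))) h‖
        ≤ ‖fderiv ℝ f (ξ + s • h) - fderiv ℝ f (ξ + s • (-h))‖ * ‖h‖ :=
          ContinuousLinearMap.le_opNorm _ _
      _ ≤ (M * ‖(ξ + s • h) - (ξ + s • (-h))‖) * ‖h‖ :=
          mul_le_mul_of_nonneg_right hl (norm_nonneg _)
      _ ≤ 2 * M * ‖h‖ ^ 2 := by
          have e : (ξ + s • h) - (ξ + s • (-h)) = (2 * s) • h := by module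
          rw [e, norm_smul, Real.norm_eq_abs]
          have habs : |2 * s| ≤ 2 := by
            rw [abs_mul, abs_two]
            nlinarith [abs_of_nonneg hs.1, hs.2, hs.1]
          calc M * (|2 * s| * ‖h‖) * ‖h‖ = |2 * s| * (M * ‖h‖ * ‖h‖) := by ring
            _ ≤ 2 * (M * ‖h‖ * ‖h‖) := mul_le_mul_of_nonneg_right habs (by positivity)
            _ = 2 * M * ‖h‖ ^ 2 := by ring
  have key := norm_image_sub_le_of_norm_deriv_le_segment' hFd hbound 1
    (right_mem_Icc.mpr zero_le_one)
  have e1 : F 1 = f (ξ + h) + f (ξ - h) := by simp [hF, sub_eq_add_neg]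
  have e0 : F 0 = 2 * f ξ := by simp [hF, two_mul]
  rw [e1, e0, Real.norm_eq_abs] at key
  simpa using key

lemma hnorm_continuous : Continuous (hnorm (n := n)) := by
  have h1 : Continuous fun x : ℝ => x ^ ((1:ℝ)/4) :=
    continuous_iff_continuousAt.mpr fun x =>
      Real.continuousAt_rpow_const x _ (Or.inr (by norm_num))
  have h2 : Continuous fun ξ : Hgrp n => ‖ξ.1‖ ^ 4 + ξ.2 ^ 2 := by fun_prop
  exact h1.comp h2

lemma hvec_continuous : Continuous fun q : Hgrp n × Hgrp n => hvec q.1 q.2 := by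
  have hinner : Continuous fun q : Hgrp n × Hgrp n => (@inner ℂ _ _ q.2.1 q.1.1 : ℂ) :=
    continuous_inner.comp ((continuous_snd.fst).prodMk (continuous_fst.fst))
  have heq : (fun q : Hgrp n × Hgrp n => (∑ j, q.1.1 j * (starRingEnd ℂ) (q.2.1 j)).im)
      = fun q : Hgrp n × Hgrp n => (@inner ℂ _ _ q.2.1 q.1.1 : ℂ).im := by
    funext q
    exact congrArg Complex.im (sum_eq_inner q.1 q.2)
  refine Continuous.prodMk (continuous_snd.fst) ?_
  have him : Continuous fun q : Hgrp n × Hgrp n =>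
      (∑ j, q.1.1 j * (starRingEnd ℂ) (q.2.1 j)).im := by
    rw [heq]; exact Complex.continuous_im.comp hinner
  fun_prop

/-- The key uniform bound on the unit sphere slab. -/
lemma unit_slice (f : Hgrp n → ℝ) (hreg : ContDiffOn ℝ 2 f {(0 : Hgrp n)}ᶜ) :
    ∃ M : ℝ, 0 < M ∧ ∀ ξ η : Hgrp n, hnorm ξ = 1 → hnorm η ≤ 1/2 →
      |f (hmul ξ η) + f (hmul ξ (hinv η)) - 2 * f ξ| ≤ M * hnorm η ^ 2 := by
  classical
  set Φ : (Hgrp n × Hgrp n) × ℝ → Hgrp n :=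
    fun p => p.1.1 + p.2 • hvec p.1.1 p.1.2 with hΦdef
  have hΦ : Continuous Φ := by
    apply Continuous.add (continuous_fst.fst)
    exact continuous_snd.smul (hvec_continuous.comp continuous_fst)
  set K : Set ((Hgrp n × Hgrp n) × ℝ) :=
    {p | hnorm p.1.1 = 1 ∧ hnorm p.1.2 ≤ 1/2 ∧ |p.2| ≤ 1} with hKdef
  have hKc : IsCompact K := by
    apply Metric.isCompact_of_isClosed_isBounded
    · refine IsClosed.inter (isClosed_eq (hnorm_continuous.comp (continuous_fst.fst)) continuous_const) ?_
      refine IsClosed.inter (isClosed_le (hnorm_continuous.comp (continuous_fst.snd)) continuous_const) ?_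
      exact isClosed_le (continuous_abs.comp continuous_snd) continuous_const
    · rw [Metric.isBounded_iff_subset_closedBall 0]
      refine ⟨1, fun p hp => ?_⟩
      obtain ⟨hp1, hp2, hp3⟩ := hp
      simp only [Metric.mem_closedBall, dist_zero_right]
      rw [Prod.norm_def, Prod.norm_def, Prod.norm_def]
      have b1 : ‖p.1.1.1‖ ≤ 1 := by have := hg_norm_fst_le p.1.1; rw [hp1] at this; exact this
      have b2 : ‖p.1.1.2‖ ≤ 1 := by
        have := hg_abs_snd_le p.1.1; rw [hp1] at this
        rw [Real.norm_eq_abs]; simpa using this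
      have b3 : ‖p.1.2.1‖ ≤ 1 := by
        have := hg_norm_fst_le p.1.2; linarith
      have b4 : ‖p.1.2.2‖ ≤ 1 := by
        have h2 := hg_abs_snd_le p.1.2
        have h0 := hnorm_nonneg p.1.2
        rw [Real.norm_eq_abs]
        nlinarith
      have b5 : ‖p.2‖ ≤ 1 := by rw [Real.norm_eq_abs]; exact hp3
      exact max_le (max_le (max_le b1 b2) (max_le b3 b4)) b5
  have hSsub : Φ '' K ⊆ {(0 : Hgrp n)}ᶜ := by
    rintro x ⟨p, hp, rfl⟩
    exact nonvanish hp.1 hp.2.1 hp.2.2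
  have hcont2 : ContinuousOn (fderiv ℝ (fderiv ℝ f)) {(0 : Hgrp n)}ᶜ := by
    have hdf : ContDiffOn ℝ 1 (fderiv ℝ f) {(0 : Hgrp n)}ᶜ :=
      hreg.fderiv_of_isOpen isOpen_compl_singleton (by norm_num)
    exact hdf.continuousOn_fderiv_of_isOpen isOpen_compl_singleton le_rfl
  obtain ⟨M₀, hM₀⟩ := (hKc.image hΦ).exists_bound_of_continuousOn (f := fderiv ℝ (fderiv ℝ f)) (hcont2.mono hSsub)
  set M : ℝ := max M₀ 1 with hMdef
  have hM1 : (1:ℝ) ≤ M := le_max_right _ _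
  refine ⟨18 * M, by linarith, ?_⟩
  intro ξ η hξ hη
  have hmem : ∀ s ∈ Icc (-1:ℝ) 1, ξ + s • hvec ξ η ∈ ({(0 : Hgrp n)}ᶜ : Set (Hgrp n)) := by
    intro s hs
    exact nonvanish hξ hη (abs_le.mpr hs)
  have hMb : ∀ s ∈ Icc (-1:ℝ) 1, ‖fderiv ℝ (fderiv ℝ f) (ξ + s • hvec ξ η)‖ ≤ M := by
    intro s hs
    have hmemS : ξ + s • hvec ξ η ∈ Φ '' K :=
      ⟨((ξ, η), s), ⟨hξ, hη, abs_le.mpr hs⟩, rfl⟩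
    exact le_trans (hM₀ _ hmemS) (le_max_left _ _)
  have hb := second_diff_bound isOpen_compl_singleton hreg hmem hMb
  rw [hmul_eq_add, hmul_hinv_eq_sub]
  refine le_trans hb ?_
  have hv := hvec_norm_le hξ hη
  have hρ0 : 0 ≤ hnorm η := hnorm_nonneg η
  have hv2 : ‖hvec ξ η‖ ^ 2 ≤ 9 * hnorm η ^ 2 := by nlinarith [norm_nonneg (hvec ξ η)]
  nlinarith [norm_nonneg (hvec ξ η)]

end FSaux

/-- Second-order Folland–Stein estimate for homogeneous `C²` functions. -/
theorem stmt3 (n : ℕ) (lam : ℝ) (f : Hgrp n → ℝ)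
    (hhom : ∀ r : ℝ, 0 < r → ∀ ξ : Hgrp n, f (dil r ξ) = r ^ lam * f ξ)
    (hreg : ContDiffOn ℝ 2 f {(0 : Hgrp n)}ᶜ) :
    ∃ C : ℝ, 0 < C ∧ ∀ ξ η : Hgrp n, hnorm η ≤ hnorm ξ / 2 →
      |f (hmul ξ η) + f (hmul ξ (hinv η)) - 2 * f ξ| ≤
        C * hnorm η ^ 2 * hnorm ξ ^ (lam - 2) := by
  classical
  obtain ⟨M, hMpos, hM⟩ := FSaux.unit_slice f hreg
  refine ⟨M, hMpos, ?_⟩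
  intro ξ η hle
  by_cases hξ0 : ξ = 0
  · subst hξ0
    have h0 : hnorm ((0 : Hgrp n)) = 0 := by
      simp [hnorm, Real.zero_rpow]
    rw [h0] at hle
    have hη0 : η = 0 := FSaux.hnorm_eq_zero
      (le_antisymm (by linarith) (FSaux.hnorm_nonneg η))
    subst hη0
    have hmul0 : hmul (0 : Hgrp n) (0 : Hgrp n) = 0 := by
      simp [hmul, Prod.ext_iff]
    have hinv0 : hinv (0 : Hgrp n) = (0 : Hgrp n) := by simp [hinv, Prod.ext_iff]
    rw [hinv0, hmul0]
    have hη0' : hnorm ((0 : Hgrp n)) = 0 := h0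
    rw [hη0']
    have hz : f ((0:Hgrp n)) + f 0 - 2 * f 0 = 0 := by ring
    rw [hz]
    simp
  · have hR : 0 < hnorm ξ := lt_of_le_of_ne (FSaux.hnorm_nonneg ξ)
      (fun h => hξ0 (FSaux.hnorm_eq_zero h.symm))
    set R : ℝ := hnorm ξ with hRdef
    have hRinv : 0 < R⁻¹ := inv_pos.mpr hR
    set ξ' : Hgrp n := dil R⁻¹ ξ with hξ'def
    set η' : Hgrp n := dil R⁻¹ η with hη'def
    have hξ'1 : hnorm ξ' = 1 := by
      rw [hξ'def, FSaux.hnorm_dil hRinv, inv_mul_cancel₀ (ne_of_gt hR)]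
    have hη'le : hnorm η' ≤ 1/2 := by
      rw [hη'def, FSaux.hnorm_dil hRinv]
      have h' : R⁻¹ * hnorm η ≤ R⁻¹ * (R / 2) := mul_le_mul_of_nonneg_left hle (le_of_lt hRinv)
      have h'' : R⁻¹ * (R / 2) = 1/2 := by field_simp
      linarith
    have hrecov : ∀ ζ : Hgrp n, dil R (dil R⁻¹ ζ) = ζ := by
      intro ζ
      rw [FSaux.dil_dil, mul_inv_cancel₀ (ne_of_gt hR), FSaux.dil_one]
    have e1 : f (hmul ξ η) = R ^ lam * f (hmul ξ' η') := by
      rw [← hhom R hR, FSaux.dil_hmul, hrecov, hrecov]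
    have e2 : f (hmul ξ (hinv η)) = R ^ lam * f (hmul ξ' (hinv η')) := by
      rw [← hhom R hR, FSaux.dil_hmul, FSaux.dil_hinv, hrecov, hrecov]
    have e3 : f ξ = R ^ lam * f ξ' := by
      rw [← hhom R hR, hrecov]
    have hRpow : 0 < R ^ lam := Real.rpow_pos_of_pos hR lam
    have hbound := hM ξ' η' hξ'1 hη'le
    have hη' : hnorm η' = R⁻¹ * hnorm η := by rw [hη'def, FSaux.hnorm_dil hRinv]
    calc |f (hmul ξ η) + f (hmul ξ (hinv η)) - 2 * f ξ|
        = R ^ lam * |f (hmul ξ' η') + f (hmul ξ' (hinv η')) - 2 * f ξ'| := by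
          have hfac : R ^ lam * f (hmul ξ' η') + R ^ lam * f (hmul ξ' (hinv η')) -
              2 * (R ^ lam * f ξ')
              = R ^ lam * (f (hmul ξ' η') + f (hmul ξ' (hinv η')) - 2 * f ξ') := by ring
          rw [e1, e2, e3, hfac, abs_mul, abs_of_pos hRpow]
      _ ≤ R ^ lam * (M * hnorm η' ^ 2) := by
          exact mul_le_mul_of_nonneg_left hbound (le_of_lt hRpow)
      _ = M * hnorm η ^ 2 * (R ^ lam * (R⁻¹) ^ 2) := by
          rw [hη']; ring
      _ = M * hnorm η ^ 2 * R ^ (lam - 2) := by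
          have hRne : R ≠ 0 := ne_of_gt hR
          have h2 : R ^ (lam - 2) = R ^ lam / R ^ (2:ℕ) := by
            rw [← Real.rpow_natCast R 2, ← Real.rpow_sub hR]
            norm_num
          rw [h2]
          field_simp
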